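/- For every positive integer q there exists an m×m integer matrix M with m ≤ ⌈log₂(q+2)⌉, all entries of M in {0,1,2,3,4}, and |det M| = q. -/

import Mathlib

lemma rep (q : ℕ) (hq : 0 < q) :
    ∃ (n : ℕ) (η : Fin (n+1) → ℤ), (∀ i, η i = 1 ∨ η i = 2) ∧
      (∑ i : Fin (n+1), η i * 2 ^ (i : ℕ)) = q := by
  induction q using Nat.strong_induction_on with
  | _ q ih =>
    match q, hq with
    | 1, _ => exact ⟨0, ![1], by simp, by simp⟩
    | 2, _ => exact ⟨0, ![2], by simp, by simp⟩
    | (k+3), _ =>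
      set q := k + 3 with hq3
      set r : ℕ := if q % 2 = 1 then 1 else 2 with hr
      have h2 : r = 1 ∧ q % 2 = 1 ∨ r = 2 ∧ q % 2 = 0 := by
        rcases Nat.mod_two_eq_zero_or_one q with h | h <;> simp [hr, h]
      have hr12 : r = 1 ∨ r = 2 := by omega
      set q' := (q - r) / 2 with hq'
      have hq'eq : 2 * q' + r = q := by omega
      have hq'pos : 0 < q' := by omega
      have hq'lt : q' < q := by omega
      obtain ⟨n, η, hη, hsum⟩ := ih q' hq'lt hq'pos
      refine ⟨n + 1, Fin.cons (r : ℤ) η, ?_, ?_⟩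
      · intro i
        refine Fin.cases ?_ ?_ i
        · simp only [Fin.cons_zero]
          exact_mod_cast hr12
        · intro j; simpa using hη j
      · rw [Fin.sum_univ_succ]
        simp only [Fin.cons_zero, Fin.cons_succ, Fin.val_succ, pow_succ]
        have : ∑ i : Fin (n+1), η i * (2 ^ (i:ℕ) * 2) =
            2 * ∑ i : Fin (n+1), η i * 2 ^ (i:ℕ) := by
          rw [Finset.mul_sum]; congr 1; ext i; ring
        rw [this, hsum]
        push_cast [← hq'eq]
        simp; ring
open Matrix Finset in
private lemma det_aux (n : ℕ) (η : Fin (n+1) → ℤ) :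
    ∃ M : Matrix (Fin (n+1)) (Fin (n+1)) ℤ,
      (∀ i j, M i j = η j + (if (j:ℕ)+1 = (i:ℕ) then 2 else 0)
        - (if i = j ∧ i ≠ 0 then 1 else 0)) ∧
      |M.det| = |∑ k : Fin (n+1), η k * 2 ^ (k:ℕ)| := by
  classical
  set M : Matrix (Fin (n+1)) (Fin (n+1)) ℤ := Matrix.of fun i j =>
    η j + (if (j:ℕ)+1 = (i:ℕ) then 2 else 0) - (if i = j ∧ i ≠ 0 then 1 else 0) with hM
  set T : Matrix (Fin (n+1)) (Fin (n+1)) ℤ := Matrix.of fun k j =>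
    if (j:ℕ) ≤ (k:ℕ) then 2 ^ ((k:ℕ) - (j:ℕ)) else 0 with hT
  set L : Matrix (Fin (n+1)) (Fin (n+1)) ℤ := Matrix.of fun i k =>
    if i = k then 1 else if k = 0 then -1 else 0 with hL
  set s : Fin (n+1) → ℤ := fun j =>
    ∑ k : Fin (n+1), (if (j:ℕ) ≤ (k:ℕ) then η k * 2 ^ ((k:ℕ) - (j:ℕ)) else 0) with hs
  -- Step A
  have stepA : ∀ i j, (M * T) i j = s j - (if i = j ∧ i ≠ 0 then 1 else 0) := by
    intro i j
    rw [Matrix.mul_apply]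
    have expand : ∀ k : Fin (n+1), M i k * T k j =
        (if (j:ℕ) ≤ (k:ℕ) then η k * 2 ^ ((k:ℕ) - (j:ℕ)) else 0)
        + (if (k:ℕ)+1 = (i:ℕ) then 2 * T k j else 0)
        - (if i = k ∧ i ≠ 0 then T k j else 0) := by
      intro k
      simp only [hM, hT, Matrix.of_apply]
      split_ifs <;> ring
    rw [Finset.sum_congr rfl fun k _ => expand k]
    rw [Finset.sum_sub_distrib, Finset.sum_add_distrib]
    have h1 : (∑ k : Fin (n+1), if (j:ℕ) ≤ (k:ℕ) then η k * 2 ^ ((k:ℕ) - (j:ℕ)) else 0) = s j := rfl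
    rw [h1]
    have h3 : (∑ k : Fin (n+1), if i = k ∧ i ≠ 0 then T k j else 0)
        = if i ≠ 0 then T i j else 0 := by
      by_cases hi : i = 0
      · simp [hi]
      · simp only [hi, ne_eq, not_false_eq_true, and_true, if_true]
        rw [Finset.sum_ite_eq]
        simp
    rw [h3]
    induction i using Fin.cases with
    | zero =>
      simp
    | succ p =>
      have hcond : ∀ k : Fin (n+1), ((k:ℕ)+1 = ((p.succ : Fin (n+1)):ℕ)) ↔ k = p.castSucc := by
        intro k
        simp only [Fin.ext_iff, Fin.val_succ, Fin.coe_castSucc]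
        omega
      have h2 : (∑ k : Fin (n+1), if (k:ℕ)+1 = ((p.succ : Fin (n+1)):ℕ) then 2 * T k j else 0)
          = 2 * T p.castSucc j := by
        simp only [hcond]
        rw [Finset.sum_ite_eq']
        simp
      rw [h2]
      have hne : (p.succ : Fin (n+1)) ≠ 0 := Fin.succ_ne_zero p
      simp only [hne, ne_eq, not_false_eq_true, if_true, and_true]
      have key : 2 * T p.castSucc j - T p.succ j = -(if p.succ = j then 1 else 0) := by
        simp only [hT, Matrix.of_apply, Fin.coe_castSucc, Fin.val_succ, Fin.ext_iff]
        rcases lt_trichotomy ((j:ℕ)) ((p:ℕ)+1) with h | h | h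
        · have hle : (j:ℕ) ≤ (p:ℕ) := by omega
          have hne2 : ¬ ((p:ℕ)+1 = (j:ℕ)) := by omega
          simp only [hle, if_true, (by omega : (j:ℕ) ≤ (p:ℕ)+1), hne2, if_false]
          have : (p:ℕ) + 1 - (j:ℕ) = ((p:ℕ) - (j:ℕ)) + 1 := by omega
          rw [this, pow_succ]
          ring
        · have h1' : ¬ ((j:ℕ) ≤ (p:ℕ)) := by omega
          simp only [h1', if_false, (by omega : (j:ℕ) ≤ (p:ℕ)+1), if_true,
            (by omega : (p:ℕ)+1 = (j:ℕ)), (by omega : (p:ℕ)+1-(j:ℕ) = 0)]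
          simp
        · have h1' : ¬ ((j:ℕ) ≤ (p:ℕ)) := by omega
          have h2' : ¬ ((j:ℕ) ≤ (p:ℕ)+1) := by omega
          have h3' : ¬ ((p:ℕ)+1 = (j:ℕ)) := by omega
          simp [h1', h2', h3']
      rw [add_sub_assoc, key]
      ring
  -- Step B
  have stepB : ∀ i j, (L * (M * T)) i j =
      if i = 0 then s j else (if i = j then -1 else 0) := by
    intro i j
    rw [Matrix.mul_apply]
    have expand : ∀ k : Fin (n+1), L i k * (M * T) k j =
        (if i = k then (M*T) k j else 0) + (if k = 0 ∧ i ≠ 0 then -((M*T) k j) else 0) := by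
      intro k
      simp only [hL, Matrix.of_apply]
      rcases eq_or_ne i k with h1 | h1
      · subst h1
        rcases eq_or_ne i 0 with h0 | h0 <;> simp [h0]
      · rcases eq_or_ne k 0 with h2 | h2
        · subst h2
          have h0 : i ≠ 0 := h1
          simp [h1, h0]
        · simp [h1, h2]
    rw [Finset.sum_congr rfl fun k _ => expand k, Finset.sum_add_distrib]
    rw [Finset.sum_ite_eq]
    by_cases hi : i = 0
    · simp only [hi, ne_eq, not_true_eq_false, and_false, if_false, Finset.sum_const_zero,
        Finset.mem_univ, if_true, add_zero, stepA]
      simp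
    · have hrest : (∑ k : Fin (n+1), if k = 0 ∧ i ≠ 0 then -((M*T) k j) else 0)
          = -((M*T) 0 j) := by
        simp only [hi, ne_eq, not_false_eq_true, and_true]
        rw [Finset.sum_ite_eq']
        simp
      rw [hrest]
      simp only [Finset.mem_univ, if_true, stepA, hi, if_false]
      simp only [Fin.zero_eta, ne_eq, not_true_eq_false, and_false, if_false, sub_zero]
      by_cases hij : i = j
      · subst hij
        simp only [hi, ne_eq, not_false_eq_true, and_self, if_true, if_false]
        ring
      · simp only [hij, false_and, if_false, sub_zero]
        ring
  -- determinants of L and T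
  have hdetT : T.det = 1 := by
    have htri : T.BlockTriangular OrderDual.toDual := by
      intro i j hij
      have hlt : i < j := hij
      have hlt' : (i:ℕ) < (j:ℕ) := hlt
      simp only [hT, Matrix.of_apply]
      exact if_neg (by omega)
    rw [Matrix.det_of_lowerTriangular T htri]
    apply Finset.prod_eq_one
    intro i _
    simp [hT]
  have hdetL : L.det = 1 := by
    have htri : L.BlockTriangular OrderDual.toDual := by
      intro i j hij
      have hlt : i < j := hij
      have h1 : i ≠ j := ne_of_lt hlt
      have h2 : j ≠ 0 := by
        intro h
        rw [h] at hlt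
        exact absurd hlt (by simp [Fin.lt_iff_val_lt_val])
      simp [hL, h1, h2]
    rw [Matrix.det_of_lowerTriangular L htri]
    apply Finset.prod_eq_one
    intro i _
    simp [hL]
  -- determinant of N = L * M * T
  have hdetN : |(L * (M * T)).det| = |s 0| := by
    have htri : (L * (M * T)).BlockTriangular id := by
      intro i j hij
      have hlt : (j:Fin (n+1)) < i := hij
      have h1 : i ≠ 0 := by
        intro h
        rw [h] at hlt
        exact absurd hlt (by simp [Fin.lt_iff_val_lt_val])
      have h2 : i ≠ j := (ne_of_lt hlt).symm
      rw [stepB]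
      simp [h1, h2]
    rw [Matrix.det_of_upperTriangular htri, Finset.abs_prod]
    have hdiag : ∀ i : Fin (n+1), |(L * (M * T)) i i| = if i = 0 then |s 0| else 1 := by
      intro i
      rw [stepB]
      by_cases hi : i = 0
      · subst hi; simp
      · simp [hi]
    rw [Finset.prod_congr rfl fun i _ => hdiag i]
    rw [Finset.prod_ite_eq']
    simp
  have hs0 : s 0 = ∑ k : Fin (n+1), η k * 2 ^ (k:ℕ) := by
    simp [hs]
  rw [Matrix.det_mul, Matrix.det_mul, hdetL, hdetT, one_mul, mul_one] at hdetN
  exact ⟨M, fun i j => rfl, by rw [hdetN, hs0]⟩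

theorem stmt_5 (q : ℕ) (hq : 0 < q) :
    ∃ (m : ℕ) (M : Matrix (Fin m) (Fin m) ℤ),
      m ≤ Nat.clog 2 (q + 2) ∧
      (∀ i j, M i j ∈ ({0, 1, 2, 3, 4} : Set ℤ)) ∧
      |M.det| = q := by
  obtain ⟨n, η, hη, hsum⟩ := rep q hq
  obtain ⟨M, hMdef, hMdet⟩ := det_aux n η
  refine ⟨n + 1, M, ?_, ?_, ?_⟩
  · -- size bound
    have geo : ∀ m : ℕ, ∑ i ∈ Finset.range m, (2:ℤ)^i = 2^m - 1 := by
      intro m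
      induction m with
      | zero => simp
      | succ k ih => rw [Finset.sum_range_succ, ih]; ring
    have hge : (2:ℤ)^(n+1) - 1 ≤ (q:ℤ) := by
      rw [← hsum]
      calc (2:ℤ)^(n+1) - 1 = ∑ i ∈ Finset.range (n+1), (2:ℤ)^i := (geo (n+1)).symm
        _ = ∑ i : Fin (n+1), (2:ℤ)^(i:ℕ) := (Fin.sum_univ_eq_sum_range _ _).symm
        _ ≤ ∑ i : Fin (n+1), η i * 2^(i:ℕ) := by
            apply Finset.sum_le_sum
            intro i _
            have h1 : (1:ℤ) ≤ η i := by rcases hη i with h | h <;> rw [h] <;> norm_num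
            have h2 : (0:ℤ) ≤ 2^(i:ℕ) := by positivity
            nlinarith
    have hlt : 2^(n+1) < q + 2 := by
      have : (2:ℤ)^(n+1) < (q:ℤ) + 2 := by linarith
      exact_mod_cast this
    have := (Nat.lt_clog_iff_pow_lt (by norm_num)).mpr hlt
    omega
  · -- entries
    intro i j
    rw [hMdef i j]
    rcases hη j with h | h <;> rw [h] <;> split_ifs <;> norm_num
  · -- determinant
    rw [hMdet, hsum, abs_of_nonneg (by positivity : (0:ℤ) ≤ (q:ℤ))]
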